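/- Under the same setup, the functional Λ is locally Lipschitz in the sets: there exists a constant C < ∞ depending only on the maps L_i such that for arbitrary 4-tuples E, E' of finite-measure subsets of ℝ², |Λ(E) − Λ(E')| ≤ C · (max_i |E_i| + max_j |E'_j|) · max_k |E_k Δ E'_k|. -/

import Mathlib

open MeasureTheory Set

noncomputable section

abbrev R2 := ℝ × ℝ
abbrev R4 := (ℝ × ℝ) × ℝ × ℝ

def Lam (L : Fin 4 → R4 →ₗ[ℝ] R2) (E : Fin 4 → Set R2) : ℝ :=
  ∫ z : R4, ∏ i, (E i).indicator (fun _ => (1 : ℝ)) (L i z)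

instance : (volume : Measure R2).IsAddHaarMeasure := by
  rw [Measure.volume_eq_prod]; infer_instance

instance : (volume : Measure R4).IsAddHaarMeasure := by
  rw [Measure.volume_eq_prod]; infer_instance

theorem lam_key (L : Fin 4 → R4 →ₗ[ℝ] R2) (k j : Fin 4)
    (hb : Function.Bijective (fun z : R4 => (L k z, L j z)))
    (A B : Set R2) :
    volume ((L k) ⁻¹' A ∩ (L j) ⁻¹' B) =
      ENNReal.ofReal |(LinearMap.det ((L k).prod (L j) : R4 →ₗ[ℝ] R4))⁻¹| *
        (volume A * volume B) := by
  set F : R4 →ₗ[ℝ] R4 := (L k).prod (L j) with hF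
  have hb' : Function.Bijective F := hb
  have hdet : LinearMap.det F ≠ 0 := by
    have h1 : ((LinearEquiv.ofBijective F hb' : R4 →ₗ[ℝ] R4)) = F := by
      apply LinearMap.ext; intro z; rfl
    have := (LinearEquiv.ofBijective F hb').isUnit_det'
    rw [h1] at this
    exact this.ne_zero
  have hpre : (L k) ⁻¹' A ∩ (L j) ⁻¹' B = F ⁻¹' (A ×ˢ B) := by
    ext z
    simp [hF, Set.mem_prod, LinearMap.prod_apply]
  rw [hpre, Measure.addHaar_preimage_linearMap volume hdet,
    show (volume : Measure R4) (A ×ˢ B) = volume A * volume B from by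
      rw [show (volume : Measure R4) = (volume : Measure R2).prod volume from
        Measure.volume_eq_prod _ _, Measure.prod_prod]]

theorem lam_eq_toReal (L : Fin 4 → R4 →ₗ[ℝ] R2) (E : Fin 4 → Set R2)
    (hE : ∀ i, MeasurableSet (E i)) :
    Lam L E = (volume (⋂ i, L i ⁻¹' (E i))).toReal := by
  have hm : MeasurableSet (⋂ i, L i ⁻¹' (E i)) :=
    MeasurableSet.iInter fun i =>
      (hE i).preimage (L i).continuous_of_finiteDimensional.measurable
  rw [← measureReal_def, ← integral_indicator_one hm, Lam]
  congr 1
  funext z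
  by_cases h : z ∈ ⋂ i, L i ⁻¹' (E i)
  · rw [Set.indicator_of_mem h]
    refine Finset.prod_eq_one fun i _ => ?_
    exact Set.indicator_of_mem (Set.mem_iInter.mp h i) (fun _ => (1:ℝ))
  · rw [Set.indicator_of_notMem h]
    obtain ⟨i, hi⟩ := not_forall.mp (by simpa [Set.mem_iInter] using h)
    exact Finset.prod_eq_zero (Finset.mem_univ i) (Set.indicator_of_notMem hi _)

theorem abs_toReal_sub_le {x y d : ENNReal} (hx : x ≠ ⊤) (hy : y ≠ ⊤) (hd : d ≠ ⊤)
    (h1 : x ≤ y + d) (h2 : y ≤ x + d) : |x.toReal - y.toReal| ≤ d.toReal := by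
  rw [abs_sub_le_iff]
  constructor
  · have := (ENNReal.toReal_mono (by finiteness) h1)
    rw [ENNReal.toReal_add hy hd] at this
    linarith
  · have := (ENNReal.toReal_mono (by finiteness) h2)
    rw [ENNReal.toReal_add hx hd] at this
    linarith

/-- Λ is locally Lipschitz in the sets:
|Λ(E) − Λ(E')| ≤ C (maxᵢ|Eᵢ| + maxⱼ|E'ⱼ|) maxₖ|Eₖ Δ E'ₖ|. -/
theorem lam_locally_lipschitz (L : Fin 4 → R4 →ₗ[ℝ] R2)
    (hsurj : ∀ i, Function.Surjective (L i))
    (hnd : ∀ i j, i ≠ j → Function.Bijective (fun z : R4 => (L i z, L j z))) :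
    ∃ C : ℝ, 0 ≤ C ∧ ∀ E E' : Fin 4 → Set R2,
      (∀ i, MeasurableSet (E i)) → (∀ i, volume (E i) < ⊤) →
      (∀ i, MeasurableSet (E' i)) → (∀ i, volume (E' i) < ⊤) →
      |Lam L E - Lam L E'| ≤
        C * ((⨆ i, (volume (E i)).toReal) + ⨆ j, (volume (E' j)).toReal) *
          ⨆ k, (volume (symmDiff (E k) (E' k))).toReal := by
  classical
  set jf : Fin 4 → Fin 4 := fun k => if k = 0 then 1 else 0 with hjf
  have hkj : ∀ k, k ≠ jf k := by decide
  set c : Fin 4 → ENNReal := fun k =>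
    ENNReal.ofReal |(LinearMap.det ((L k).prod (L (jf k)) : R4 →ₗ[ℝ] R4))⁻¹| with hc
  have hcne : ∀ k, c k ≠ ⊤ := fun k => ENNReal.ofReal_ne_top
  refine ⟨∑ k, (c k).toReal, Finset.sum_nonneg fun k _ => ENNReal.toReal_nonneg, ?_⟩
  intro E E' hE hEfin hE' hE'fin
  set D : Fin 4 → Set R2 := fun k => symmDiff (E k) (E' k) with hD
  have hDfin : ∀ k, volume (D k) ≠ ⊤ := by
    intro k
    refine ne_top_of_le_ne_top ?_ (measure_mono (Set.symmDiff_subset_union (s := E k) (t := E' k)))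
    exact ((measure_union_le _ _).trans_lt
      (ENNReal.add_lt_top.mpr ⟨hEfin k, hE'fin k⟩)).ne
  set S : Set R4 := ⋂ i, L i ⁻¹' (E i) with hS
  set S' : Set R4 := ⋂ i, L i ⁻¹' (E' i) with hS'
  have hSfin : volume S ≠ ⊤ := by
    refine ne_top_of_le_ne_top ?_
      (measure_mono (show S ⊆ L 0 ⁻¹' (E 0) ∩ L 1 ⁻¹' (E 1) from fun z hz =>
        ⟨Set.mem_iInter.mp hz 0, Set.mem_iInter.mp hz 1⟩))
    rw [lam_key L 0 1 (hnd 0 1 (by decide))]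
    exact ENNReal.mul_ne_top ENNReal.ofReal_ne_top
      (ENNReal.mul_ne_top (hEfin 0).ne (hEfin 1).ne)
  have hS'fin : volume S' ≠ ⊤ := by
    refine ne_top_of_le_ne_top ?_
      (measure_mono (show S' ⊆ L 0 ⁻¹' (E' 0) ∩ L 1 ⁻¹' (E' 1) from fun z hz =>
        ⟨Set.mem_iInter.mp hz 0, Set.mem_iInter.mp hz 1⟩))
    rw [lam_key L 0 1 (hnd 0 1 (by decide))]
    exact ENNReal.mul_ne_top ENNReal.ofReal_ne_top
      (ENNReal.mul_ne_top (hE'fin 0).ne (hE'fin 1).ne)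
  -- the symmetric-difference inclusion
  have hincl : symmDiff S S' ⊆
      ⋃ k, (L k ⁻¹' (D k) ∩ (L (jf k) ⁻¹' (E (jf k)) ∪ L (jf k) ⁻¹' (E' (jf k)))) := by
    intro z hz
    rcases Set.mem_symmDiff.mp hz with ⟨hzS, hzS'⟩ | ⟨hzS', hzS⟩
    · obtain ⟨k, hk⟩ := not_forall.mp (by simpa [hS', Set.mem_iInter] using hzS')
      refine Set.mem_iUnion.mpr ⟨k, ?_, Or.inl (Set.mem_iInter.mp hzS (jf k))⟩
      exact Set.mem_symmDiff.mpr (Or.inl ⟨Set.mem_iInter.mp hzS k, hk⟩)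
    · obtain ⟨k, hk⟩ := not_forall.mp (by simpa [hS, Set.mem_iInter] using hzS)
      refine Set.mem_iUnion.mpr ⟨k, ?_, Or.inr (Set.mem_iInter.mp hzS' (jf k))⟩
      exact Set.mem_symmDiff.mpr (Or.inr ⟨Set.mem_iInter.mp hzS' k, hk⟩)
  -- the ENNReal bound
  set T : ENNReal := ∑ k, (c k * (volume (D k) * volume (E (jf k))) +
    c k * (volume (D k) * volume (E' (jf k)))) with hT
  have hTbound : volume (symmDiff S S') ≤ T := by
    refine (measure_mono hincl).trans ((measure_iUnion_fintype_le _ _).trans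
      (Finset.sum_le_sum fun k _ => ?_))
    have : L k ⁻¹' (D k) ∩ (L (jf k) ⁻¹' (E (jf k)) ∪ L (jf k) ⁻¹' (E' (jf k))) =
        (L k ⁻¹' (D k) ∩ L (jf k) ⁻¹' (E (jf k))) ∪
        (L k ⁻¹' (D k) ∩ L (jf k) ⁻¹' (E' (jf k))) := Set.inter_union_distrib_left ..
    rw [this]
    refine (measure_union_le _ _).trans ?_
    rw [lam_key L k (jf k) (hnd k (jf k) (hkj k)),
      lam_key L k (jf k) (hnd k (jf k) (hkj k))]
  have hTfin : T ≠ ⊤ := by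
    rw [hT]
    refine (ENNReal.sum_lt_top.mpr fun k _ => ?_).ne
    refine ENNReal.add_lt_top.mpr ⟨?_, ?_⟩ <;>
      exact (ENNReal.mul_ne_top (hcne k)
        (ENNReal.mul_ne_top (hDfin k) (by simp [(hEfin _).ne, (hE'fin _).ne]))).lt_top
  have hsdfin : volume (symmDiff S S') ≠ ⊤ := ne_top_of_le_ne_top hTfin hTbound
  -- the first step: |Lam E - Lam E'| ≤ (volume (S Δ S')).toReal
  have step1 : |Lam L E - Lam L E'| ≤ (volume (symmDiff S S')).toReal := by
    rw [lam_eq_toReal L E hE, lam_eq_toReal L E' hE']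
    refine abs_toReal_sub_le hSfin hS'fin hsdfin ?_ ?_
    · refine (measure_mono (show S ⊆ S' ∪ symmDiff S S' from fun z hz => ?_)).trans
        (measure_union_le _ _)
      by_cases h : z ∈ S'
      · exact Or.inl h
      · exact Or.inr (Set.mem_symmDiff.mpr (Or.inl ⟨hz, h⟩))
    · refine (measure_mono (show S' ⊆ S ∪ symmDiff S S' from fun z hz => ?_)).trans
        (measure_union_le _ _)
      by_cases h : z ∈ S
      · exact Or.inl h
      · exact Or.inr (Set.mem_symmDiff.mpr (Or.inr ⟨hz, h⟩))
  -- real-number bookkeeping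
  set a : ℝ := ⨆ i, (volume (E i)).toReal with ha
  set b : ℝ := ⨆ j, (volume (E' j)).toReal with hb
  set m : ℝ := ⨆ k, (volume (symmDiff (E k) (E' k))).toReal with hm
  have hbdd1 : BddAbove (Set.range fun i => (volume (E i)).toReal) :=
    (Set.finite_range _).bddAbove
  have hbdd2 : BddAbove (Set.range fun j => (volume (E' j)).toReal) :=
    (Set.finite_range _).bddAbove
  have hbdd3 : BddAbove (Set.range fun k => (volume (symmDiff (E k) (E' k))).toReal) :=
    (Set.finite_range _).bddAbove
  have hTtoReal : T.toReal = ∑ k, ((c k).toReal *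
      ((volume (D k)).toReal * (volume (E (jf k))).toReal) +
      (c k).toReal * ((volume (D k)).toReal * (volume (E' (jf k))).toReal)) := by
    rw [hT, ENNReal.toReal_sum (fun k _ => by
      exact ENNReal.add_ne_top.mpr ⟨ENNReal.mul_ne_top (hcne k)
          (ENNReal.mul_ne_top (hDfin k) (hEfin _).ne),
        ENNReal.mul_ne_top (hcne k) (ENNReal.mul_ne_top (hDfin k) (hE'fin _).ne)⟩)]
    refine Finset.sum_congr rfl fun k _ => ?_
    rw [ENNReal.toReal_add (ENNReal.mul_ne_top (hcne k)
        (ENNReal.mul_ne_top (hDfin k) (hEfin _).ne))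
      (ENNReal.mul_ne_top (hcne k) (ENNReal.mul_ne_top (hDfin k) (hE'fin _).ne)),
      ENNReal.toReal_mul, ENNReal.toReal_mul, ENNReal.toReal_mul, ENNReal.toReal_mul]
  have hfinal : T.toReal ≤ (∑ k, (c k).toReal) * (a + b) * m := by
    rw [hTtoReal]
    have key : ∀ k : Fin 4, (c k).toReal *
        ((volume (D k)).toReal * (volume (E (jf k))).toReal) +
        (c k).toReal * ((volume (D k)).toReal * (volume (E' (jf k))).toReal) ≤
        (c k).toReal * ((a + b) * m) := by
      intro k
      have hck : (0:ℝ) ≤ (c k).toReal := ENNReal.toReal_nonneg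
      have h1 : (volume (D k)).toReal ≤ m := le_ciSup hbdd3 k
      have h2 : (volume (E (jf k))).toReal ≤ a := le_ciSup hbdd1 (jf k)
      have h3 : (volume (E' (jf k))).toReal ≤ b := le_ciSup hbdd2 (jf k)
      have hd0 : (0:ℝ) ≤ (volume (D k)).toReal := ENNReal.toReal_nonneg
      have he0 : (0:ℝ) ≤ (volume (E (jf k))).toReal := ENNReal.toReal_nonneg
      have he'0 : (0:ℝ) ≤ (volume (E' (jf k))).toReal := ENNReal.toReal_nonneg
      have hm0 : (0:ℝ) ≤ m := hd0.trans h1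
      have t1 : (volume (D k)).toReal * (volume (E (jf k))).toReal ≤ m * a :=
        mul_le_mul h1 h2 he0 hm0
      have t2 : (volume (D k)).toReal * (volume (E' (jf k))).toReal ≤ m * b :=
        mul_le_mul h1 h3 he'0 hm0
      calc (c k).toReal * ((volume (D k)).toReal * (volume (E (jf k))).toReal) +
          (c k).toReal * ((volume (D k)).toReal * (volume (E' (jf k))).toReal) ≤
          (c k).toReal * (m * a) + (c k).toReal * (m * b) := by
            exact add_le_add (mul_le_mul_of_nonneg_left t1 hck)
              (mul_le_mul_of_nonneg_left t2 hck)
        _ = (c k).toReal * ((a + b) * m) := by ring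
    calc (∑ k, ((c k).toReal * ((volume (D k)).toReal * (volume (E (jf k))).toReal) +
          (c k).toReal * ((volume (D k)).toReal * (volume (E' (jf k))).toReal))) ≤
        ∑ k, (c k).toReal * ((a + b) * m) := Finset.sum_le_sum fun k _ => key k
      _ = (∑ k, (c k).toReal) * (a + b) * m := by rw [← Finset.sum_mul]; ring
  exact step1.trans ((ENNReal.toReal_mono hTfin hTbound).trans hfinal)

end
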